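/- Let F be a finite field with q elements and α ≠ β in F. Then the number of 4×4 matrices over F that are diagonalizable with eigenvalue set exactly {α, β} equals q⁸ + q⁷ + 4q⁶ + 3q⁵ + 3q⁴ + 2q³. -/

import Mathlib

open Matrix MulAction

set_option linter.unusedSectionVars false
set_option maxHeartbeats 1600000

section Aux

variable {F : Type} [Field F] [DecidableEq F]




lemma diag_submatrix' {l n : Type*} [Fintype n] [DecidableEq n] [DecidableEq l]
    (e : l ≃ n) (v : n → F) :
    (Matrix.diagonal v).submatrix e e = Matrix.diagonal (v ∘ e) := by
  ext i j
  by_cases h : i = j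
  · subst h; simp
  · rw [Matrix.submatrix_apply, Matrix.diagonal_apply_ne _ (fun hc => h (e.injective hc)),
      Matrix.diagonal_apply_ne _ h]


lemma perm_conj {n : Type*} [Fintype n] [DecidableEq n] (σ : Equiv.Perm n) (v : n → F) :
    (σ.permMatrix F) * Matrix.diagonal v * (σ⁻¹.permMatrix F) = Matrix.diagonal (v ∘ σ) := by
  show σ.toPEquiv.toMatrix * Matrix.diagonal v * (σ⁻¹).toPEquiv.toMatrix = _
  rw [PEquiv.toMatrix_toPEquiv_mul, PEquiv.mul_toMatrix_toPEquiv]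
  have : (((Matrix.diagonal v).submatrix σ id).submatrix id ((σ⁻¹ : Equiv.Perm n) : n ≃ n).symm)
      = (Matrix.diagonal v).submatrix σ σ := by
    rw [Matrix.submatrix_submatrix]
    rfl
  rw [this, diag_submatrix']

def permUnit {n : Type*} [Fintype n] [DecidableEq n] (σ : Equiv.Perm n) :
    (Matrix n n F)ˣ where
  val := σ.permMatrix F
  inv := σ⁻¹.permMatrix F
  val_inv := by
    show σ.toPEquiv.toMatrix * (σ⁻¹).toPEquiv.toMatrix = 1
    rw [← PEquiv.toMatrix_trans, ← Equiv.toPEquiv_trans]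
    simp [PEquiv.toMatrix, Equiv.toPEquiv, eq_comm]
    ext i j
    simp [Matrix.one_apply]
  inv_val := by
    show (σ⁻¹).toPEquiv.toMatrix * σ.toPEquiv.toMatrix = 1
    rw [← PEquiv.toMatrix_trans, ← Equiv.toPEquiv_trans]
    simp [PEquiv.toMatrix, Equiv.toPEquiv, eq_comm]
    ext i j
    simp [Matrix.one_apply]




section Blocks

variable {I J : Type} [Fintype I] [Fintype J] [DecidableEq I] [DecidableEq J] (a b : F)

noncomputable abbrev Dsum : Matrix (I ⊕ J) (I ⊕ J) F :=
  Matrix.diagonal (Sum.elim (fun _ => a) (fun _ => b))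

lemma Dsum_eq : (Dsum a b : Matrix (I ⊕ J) (I ⊕ J) F) =
    Matrix.fromBlocks (Matrix.diagonal fun _ => a) 0 0 (Matrix.diagonal fun _ => b) :=
  (Matrix.fromBlocks_diagonal _ _).symm

lemma comm_const {K : Type} [Fintype K] [DecidableEq K] (M : Matrix K K F) (c : F) :
    M * Matrix.diagonal (fun _ => c) = Matrix.diagonal (fun _ => c) * M := by
  ext i j; simp [Matrix.mul_diagonal, Matrix.diagonal_mul, mul_comm]

lemma offdiag12 (hab : a ≠ b) (M : Matrix (I ⊕ J) (I ⊕ J) F)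
    (h : M * Dsum a b = Dsum a b * M) : M.toBlocks₁₂ = 0 := by
  ext i j
  have h2 := congrFun (congrFun h (Sum.inl i)) (Sum.inr j)
  rw [Matrix.mul_diagonal, Matrix.diagonal_mul] at h2
  simp only [Sum.elim_inl, Sum.elim_inr] at h2
  have hz : (b - a) * M (Sum.inl i) (Sum.inr j) = 0 := by linear_combination h2
  have hba : b - a ≠ 0 := sub_ne_zero.mpr hab.symm
  simpa [Matrix.toBlocks₁₂] using (mul_eq_zero.mp hz).resolve_left hba

lemma offdiag21 (hab : a ≠ b) (M : Matrix (I ⊕ J) (I ⊕ J) F)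
    (h : M * Dsum a b = Dsum a b * M) : M.toBlocks₂₁ = 0 := by
  ext i j
  have h2 := congrFun (congrFun h (Sum.inr i)) (Sum.inl j)
  rw [Matrix.mul_diagonal, Matrix.diagonal_mul] at h2
  simp only [Sum.elim_inl, Sum.elim_inr] at h2
  have hz : (a - b) * M (Sum.inr i) (Sum.inl j) = 0 := by linear_combination h2
  have hba : a - b ≠ 0 := sub_ne_zero.mpr hab
  simpa [Matrix.toBlocks₂₁] using (mul_eq_zero.mp hz).resolve_left hba

lemma block_decomp (hab : a ≠ b) (M : Matrix (I ⊕ J) (I ⊕ J) F)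
    (h : M * Dsum a b = Dsum a b * M) :
    M = Matrix.fromBlocks M.toBlocks₁₁ 0 0 M.toBlocks₂₂ := by
  conv_lhs => rw [← Matrix.fromBlocks_toBlocks M]
  rw [offdiag12 a b hab M h, offdiag21 a b hab M h]

lemma toBlocks_one₁₁ : (1 : Matrix (I ⊕ J) (I ⊕ J) F).toBlocks₁₁ = 1 := by
  ext i j
  simp [Matrix.toBlocks₁₁, Matrix.one_apply]

lemma toBlocks_one₂₂ : (1 : Matrix (I ⊕ J) (I ⊕ J) F).toBlocks₂₂ = 1 := by
  ext i j
  simp [Matrix.toBlocks₂₂, Matrix.one_apply]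

noncomputable def bk (p : (Matrix I I F)ˣ × (Matrix J J F)ˣ) :
    {g : (Matrix (I ⊕ J) (I ⊕ J) F)ˣ // (g : Matrix (I ⊕ J) (I ⊕ J) F) * Dsum a b
      = Dsum a b * (g : Matrix (I ⊕ J) (I ⊕ J) F)} := by
  refine ⟨⟨Matrix.fromBlocks (p.1 : Matrix I I F) 0 0 (p.2 : Matrix J J F),
      Matrix.fromBlocks ((p.1⁻¹ : (Matrix I I F)ˣ) : Matrix I I F) 0 0
        ((p.2⁻¹ : (Matrix J J F)ˣ) : Matrix J J F), ?_, ?_⟩, ?_⟩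
  · rw [Matrix.fromBlocks_multiply]
    simp only [Matrix.mul_zero, Matrix.zero_mul, add_zero, zero_add, Units.mul_inv]
    exact Matrix.fromBlocks_one
  · rw [Matrix.fromBlocks_multiply]
    simp only [Matrix.mul_zero, Matrix.zero_mul, add_zero, zero_add, Units.inv_mul]
    exact Matrix.fromBlocks_one
  · show Matrix.fromBlocks _ _ _ _ * Dsum a b = Dsum a b * Matrix.fromBlocks _ _ _ _
    rw [Dsum_eq, Matrix.fromBlocks_multiply, Matrix.fromBlocks_multiply]
    simp [comm_const]

lemma bk_bijective (hab : a ≠ b) : Function.Bijective (bk (I := I) (J := J) a b) := by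
  constructor
  · intro p q hpq
    have h1 : (bk a b p).1.val = (bk a b q).1.val := by rw [hpq]
    simp only [bk] at h1
    have hA := congrArg Matrix.toBlocks₁₁ h1
    have hB := congrArg Matrix.toBlocks₂₂ h1
    simp only [Matrix.toBlocks_fromBlocks₁₁, Matrix.toBlocks_fromBlocks₂₂] at hA hB
    exact Prod.ext (Units.ext hA) (Units.ext hB)
  · rintro ⟨g, hg⟩
    have hginv : ((g⁻¹ : (Matrix (I ⊕ J) (I ⊕ J) F)ˣ) : Matrix (I ⊕ J) (I ⊕ J) F) * Dsum a b
        = Dsum a b * ((g⁻¹ : (Matrix (I ⊕ J) (I ⊕ J) F)ˣ) : Matrix (I ⊕ J) (I ⊕ J) F) :=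
      (Commute.units_inv_left (hg : Commute (g : Matrix (I ⊕ J) (I ⊕ J) F) (Dsum a b)))
    have hgd := block_decomp a b hab _ hg
    have hgd' := block_decomp a b hab _ hginv
    have hmul1 : (↑g : Matrix (I ⊕ J) (I ⊕ J) F) * ((g⁻¹ : (Matrix (I ⊕ J) (I ⊕ J) F)ˣ) : Matrix (I ⊕ J) (I ⊕ J) F) = 1 := Units.mul_inv g
    have hmul2 : ((g⁻¹ : (Matrix (I ⊕ J) (I ⊕ J) F)ˣ) : Matrix (I ⊕ J) (I ⊕ J) F) * (g : Matrix (I ⊕ J) (I ⊕ J) F) = 1 := Units.inv_mul g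
    rw [hgd, hgd', Matrix.fromBlocks_multiply] at hmul1 hmul2
    simp only [Matrix.mul_zero, Matrix.zero_mul, add_zero, zero_add] at hmul1 hmul2
    have h11 := congrArg Matrix.toBlocks₁₁ hmul1
    have h11' := congrArg Matrix.toBlocks₁₁ hmul2
    have h22 := congrArg Matrix.toBlocks₂₂ hmul1
    have h22' := congrArg Matrix.toBlocks₂₂ hmul2
    simp only [Matrix.toBlocks_fromBlocks₁₁, Matrix.toBlocks_fromBlocks₂₂,
      toBlocks_one₁₁, toBlocks_one₂₂] at h11 h11' h22 h22'
    refine ⟨(⟨((g : (Matrix (I ⊕ J) (I ⊕ J) F)ˣ) : Matrix (I ⊕ J) (I ⊕ J) F).toBlocks₁₁, ((g⁻¹ : (Matrix (I ⊕ J) (I ⊕ J) F)ˣ) : Matrix (I ⊕ J) (I ⊕ J) F).toBlocks₁₁, h11, h11'⟩,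
      ⟨((g : (Matrix (I ⊕ J) (I ⊕ J) F)ˣ) : Matrix (I ⊕ J) (I ⊕ J) F).toBlocks₂₂, ((g⁻¹ : (Matrix (I ⊕ J) (I ⊕ J) F)ˣ) : Matrix (I ⊕ J) (I ⊕ J) F).toBlocks₂₂, h22, h22'⟩), ?_⟩
    apply Subtype.ext
    apply Units.ext
    show Matrix.fromBlocks _ _ _ _ = (↑g : Matrix (I ⊕ J) (I ⊕ J) F)
    exact hgd.symm

lemma blocks_card (hab : a ≠ b) :
    Nat.card {g : (Matrix (I ⊕ J) (I ⊕ J) F)ˣ // (g : Matrix (I ⊕ J) (I ⊕ J) F) * Dsum a b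
      = Dsum a b * (g : Matrix (I ⊕ J) (I ⊕ J) F)}
    = Nat.card (Matrix I I F)ˣ * Nat.card (Matrix J J F)ˣ := by
  rw [← Nat.card_prod]
  exact (Nat.card_congr (Equiv.ofBijective _ (bk_bijective a b hab))).symm

end Blocks




lemma comm_card [Fintype F] (m n : ℕ) (a b : F) (hab : a ≠ b) (dv : Fin 4 → F)
    (e : Fin m ⊕ Fin n ≃ Fin 4)
    (h1 : ∀ i, dv (e (Sum.inl i)) = a) (h2 : ∀ j, dv (e (Sum.inr j)) = b) :
    Nat.card {g : (Matrix (Fin 4) (Fin 4) F)ˣ //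
      (g : Matrix (Fin 4) (Fin 4) F) * Matrix.diagonal dv
        = Matrix.diagonal dv * (g : Matrix (Fin 4) (Fin 4) F)}
    = Nat.card (Matrix (Fin m) (Fin m) F)ˣ * Nat.card (Matrix (Fin n) (Fin n) F)ˣ := by
  rw [← blocks_card a b hab]
  apply Nat.card_congr
  have hR : ∀ M : Matrix (Fin 4) (Fin 4) F, (Matrix.reindexAlgEquiv F F e.symm) M
      = M.submatrix e e := by
    intro M
    simp [Matrix.reindex_apply]
  let Rm : (Matrix (Fin 4) (Fin 4) F) ≃* Matrix (Fin m ⊕ Fin n) (Fin m ⊕ Fin n) F :=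
    (Matrix.reindexAlgEquiv F F e.symm).toRingEquiv.toMulEquiv
  have hRD : Rm (Matrix.diagonal dv) = Dsum a b := by
    show (Matrix.reindexAlgEquiv F F e.symm) (Matrix.diagonal dv) = _
    rw [hR, diag_submatrix']
    have hfun : dv ∘ e = Sum.elim (fun _ => a) (fun _ => b) := funext fun x => by
      cases x with
      | inl i => exact h1 i
      | inr j => exact h2 j
    rw [hfun]
  refine Equiv.subtypeEquiv (Units.mapEquiv Rm).toEquiv (fun g => ?_)
  simp only [MulEquiv.toEquiv_eq_coe, MulEquiv.coe_toEquiv]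
  rw [← hRD, Units.coe_mapEquiv, ← _root_.map_mul, ← _root_.map_mul]
  exact ⟨fun h => by rw [h], fun h => Rm.injective h⟩

lemma stab_card [Fintype F] (m n : ℕ) (a b : F) (hab : a ≠ b) (dv : Fin 4 → F)
    (e : Fin m ⊕ Fin n ≃ Fin 4)
    (h1 : ∀ i, dv (e (Sum.inl i)) = a) (h2 : ∀ j, dv (e (Sum.inr j)) = b) :
    Nat.card (MulAction.stabilizer (ConjAct (Matrix (Fin 4) (Fin 4) F)ˣ) (Matrix.diagonal dv))
    = Nat.card (Matrix (Fin m) (Fin m) F)ˣ * Nat.card (Matrix (Fin n) (Fin n) F)ˣ := by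
  rw [← comm_card m n a b hab dv e h1 h2]
  apply Nat.card_congr
  refine Equiv.subtypeEquiv (ConjAct.ofConjAct (G := (Matrix (Fin 4) (Fin 4) F)ˣ)).toEquiv
    (fun g => ?_)
  rw [MulAction.mem_stabilizer_iff, ConjAct.units_smul_def]
  rw [Units.mul_inv_eq_iff_eq_mul]
  simp only [MulEquiv.toEquiv_eq_coe, MulEquiv.coe_toEquiv]




def pat (α β : F) (k : ℕ) : Fin 4 → F := fun i => if (i : ℕ) < k then α else β

def ek (k : ℕ) (hk : k ≤ 4) : Fin k ⊕ Fin (4 - k) ≃ Fin 4 :=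
  finSumFinEquiv.trans (finCongr (by omega))

lemma ek_inl (k : ℕ) (hk : k ≤ 4) (i : Fin k) : ((ek k hk (Sum.inl i) : Fin 4) : ℕ) = i := by
  simp [ek, finSumFinEquiv]

lemma ek_inr (k : ℕ) (hk : k ≤ 4) (j : Fin (4 - k)) :
    ((ek k hk (Sum.inr j) : Fin 4) : ℕ) = k + j := by
  simp [ek, finSumFinEquiv]

lemma pat_ek_inl (α β : F) (k : ℕ) (hk : k ≤ 4) (i : Fin k) :
    pat α β k (ek k hk (Sum.inl i)) = α := by
  unfold pat
  rw [if_pos]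
  rw [ek_inl]
  exact i.2

lemma pat_ek_inr (α β : F) (k : ℕ) (hk : k ≤ 4) (j : Fin (4 - k)) :
    pat α β k (ek k hk (Sum.inr j)) = β := by
  unfold pat
  rw [if_neg]
  rw [ek_inr]
  omega

def eqLt (k : ℕ) (hk : k ≤ 4) : {i : Fin 4 // (i : ℕ) < k} ≃ Fin k where
  toFun i := ⟨i.1.1, i.2⟩
  invFun j := ⟨⟨j.1, by omega⟩, j.2⟩
  left_inv i := by ext; rfl
  right_inv j := by ext; rfl

def eqNot (k : ℕ) (hk : k ≤ 4) : {i : Fin 4 // ¬ ((i : ℕ) < k)} ≃ Fin (4 - k) where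
  toFun i := ⟨i.1.1 - k, by have := i.1.2; have := i.2; omega⟩
  invFun j := ⟨⟨k + j.1, by have := j.2; omega⟩, by show ¬ k + j.1 < k; omega⟩
  left_inv i := by ext; have := i.2; simp; omega
  right_inv j := by ext; simp

lemma card_pat_eq (α β : F) (hαβ : α ≠ β) (k : ℕ) (hk : k ≤ 4) :
    Fintype.card {i : Fin 4 // pat α β k i = α} = k := by
  have h : ∀ i : Fin 4, pat α β k i = α ↔ (i : ℕ) < k := by
    intro i
    unfold pat
    by_cases h : (i : ℕ) < k
    · simp [h]
    · simp [h, hαβ.symm]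
  rw [Fintype.card_congr ((Equiv.subtypeEquivRight h).trans (eqLt k hk))]
  exact Fintype.card_fin k

lemma card_pat_sub (α β : F) (hαβ : α ≠ β) (k : ℕ) (hk : k ≤ 4) :
    Fintype.card {i : Fin 4 // pat α β k i - α ≠ 0} = 4 - k := by
  have h : ∀ i : Fin 4, pat α β k i - α ≠ 0 ↔ ¬ ((i : ℕ) < k) := by
    intro i
    unfold pat
    by_cases h : (i : ℕ) < k
    · simp [h]
    · simp [h, sub_ne_zero, hαβ.symm]
  rw [Fintype.card_congr ((Equiv.subtypeEquivRight h).trans (eqNot k hk))]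
  exact Fintype.card_fin _

lemma range_pat (α β : F) (k : ℕ) (hk1 : 1 ≤ k) (hk3 : k ≤ 3) :
    Set.range (pat α β k) = {α, β} := by
  ext x
  constructor
  · rintro ⟨i, rfl⟩
    unfold pat
    by_cases h : (i : ℕ) < k
    · simp [h]
    · simp [h]
  · rintro (rfl | rfl)
    · exact ⟨⟨0, by omega⟩, by unfold pat; rw [if_pos]; simpa using Nat.succ_le_iff.mp hk1⟩
    · exact ⟨⟨3, by omega⟩, by unfold pat; rw [if_neg]; simp; omega⟩

lemma permUnit_coe {n : Type*} [Fintype n] [DecidableEq n] (σ : Equiv.Perm n) :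
    ((permUnit σ : (Matrix n n F)ˣ) : Matrix n n F) = σ.permMatrix F := rfl

lemma permUnit_inv_coe {n : Type*} [Fintype n] [DecidableEq n] (σ : Equiv.Perm n) :
    (((permUnit σ)⁻¹ : (Matrix n n F)ˣ) : Matrix n n F) = σ⁻¹.permMatrix F := rfl

section Orbits

variable [Fintype F]

noncomputable def Ok (α β : F) (k : ℕ) : Set (Matrix (Fin 4) (Fin 4) F) :=
  MulAction.orbit (ConjAct (Matrix (Fin 4) (Fin 4) F)ˣ) (Matrix.diagonal (pat α β k))

lemma mem_Ok {α β : F} {k : ℕ} {A : Matrix (Fin 4) (Fin 4) F} :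
    A ∈ Ok α β k ↔ ∃ u : (Matrix (Fin 4) (Fin 4) F)ˣ,
      A = (u : Matrix (Fin 4) (Fin 4) F) * Matrix.diagonal (pat α β k) *
        ((u⁻¹ : (Matrix (Fin 4) (Fin 4) F)ˣ) : Matrix (Fin 4) (Fin 4) F) := by
  rw [Ok, MulAction.mem_orbit_iff]
  constructor
  · rintro ⟨g, rfl⟩
    exact ⟨ConjAct.ofConjAct g, by rw [ConjAct.units_smul_def]⟩
  · rintro ⟨u, rfl⟩
    exact ⟨ConjAct.toConjAct u, by rw [ConjAct.units_smul_def, ConjAct.ofConjAct_toConjAct]⟩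

lemma smul_one_diag (α : F) :
    (α • (1 : Matrix (Fin 4) (Fin 4) F)) = Matrix.diagonal (fun _ => α) := by
  ext i j
  by_cases h : i = j
  · subst h; simp
  · simp [Matrix.one_apply_ne h, Matrix.diagonal_apply_ne _ h]

lemma rank_mem_Ok (α β : F) (hαβ : α ≠ β) {k : ℕ} (hk : k ≤ 4)
    {A : Matrix (Fin 4) (Fin 4) F} (hA : A ∈ Ok α β k) :
    (A - α • 1).rank = 4 - k := by
  obtain ⟨u, rfl⟩ := mem_Ok.mp hA
  have hscal : (u : Matrix (Fin 4) (Fin 4) F) * (α • (1 : Matrix (Fin 4) (Fin 4) F)) *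
      ((u⁻¹ : (Matrix (Fin 4) (Fin 4) F)ˣ) : Matrix (Fin 4) (Fin 4) F)
      = α • (1 : Matrix (Fin 4) (Fin 4) F) := by
    rw [Matrix.mul_smul, Matrix.mul_one, Matrix.smul_mul, Units.mul_inv]
  have key : (u : Matrix (Fin 4) (Fin 4) F) * Matrix.diagonal (pat α β k) *
      ((u⁻¹ : (Matrix (Fin 4) (Fin 4) F)ˣ) : Matrix (Fin 4) (Fin 4) F) - α • 1
      = (u : Matrix (Fin 4) (Fin 4) F) * (Matrix.diagonal (pat α β k) - α • 1) *
        ((u⁻¹ : (Matrix (Fin 4) (Fin 4) F)ˣ) : Matrix (Fin 4) (Fin 4) F) := by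
    rw [Matrix.mul_sub, Matrix.sub_mul, hscal]
  rw [key]
  have hdu : IsUnit ((u : Matrix (Fin 4) (Fin 4) F).det) :=
    (Matrix.isUnit_iff_isUnit_det _).mp u.isUnit
  have hdu' : IsUnit (((u⁻¹ : (Matrix (Fin 4) (Fin 4) F)ˣ) : Matrix (Fin 4) (Fin 4) F).det) :=
    (Matrix.isUnit_iff_isUnit_det _).mp (u⁻¹).isUnit
  rw [Matrix.rank_mul_eq_left_of_isUnit_det _ _ hdu',
    Matrix.rank_mul_eq_right_of_isUnit_det _ _ hdu]
  rw [smul_one_diag, Matrix.diagonal_sub, Matrix.rank_diagonal]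
  exact card_pat_sub α β hαβ k hk

lemma Ok_disj (α β : F) (hαβ : α ≠ β) {k l : ℕ} (hk : k ≤ 4) (hl : l ≤ 4) (hkl : k ≠ l) :
    Disjoint (Ok α β k) (Ok α β l) := by
  rw [Set.disjoint_left]
  intro A hAk hAl
  have h1 := rank_mem_Ok α β hαβ hk hAk
  have h2 := rank_mem_Ok α β hαβ hl hAl
  omega

lemma S_mem_orbit (α β : F) (hαβ : α ≠ β) (d : Fin 4 → F)
    (P : (Matrix (Fin 4) (Fin 4) F)ˣ) (hrange : Set.range d = {α, β}) :
    ∃ k, 1 ≤ k ∧ k ≤ 3 ∧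
      ((P : Matrix (Fin 4) (Fin 4) F) * Matrix.diagonal d *
        ((P⁻¹ : (Matrix (Fin 4) (Fin 4) F)ˣ) : Matrix (Fin 4) (Fin 4) F)) ∈ Ok α β k := by
  set k := Fintype.card {i : Fin 4 // d i = α} with hkdef
  have hα : α ∈ Set.range d := hrange ▸ (by simp)
  have hβ : β ∈ Set.range d := hrange ▸ (by simp)
  obtain ⟨iα, hiα⟩ := hα
  obtain ⟨iβ, hiβ⟩ := hβ
  have hk1 : 1 ≤ k := Fintype.card_pos_iff.mpr ⟨⟨iα, hiα⟩⟩
  have hkle : k ≤ 4 := by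
    have := Fintype.card_subtype_le (fun i : Fin 4 => d i = α)
    simpa using this
  have hcompl : 0 < Fintype.card {i : Fin 4 // ¬ d i = α} :=
    Fintype.card_pos_iff.mpr ⟨⟨iβ, by rw [hiβ]; exact fun h => hαβ h.symm⟩⟩
  have hk3 : k ≤ 3 := by
    have hc := Fintype.card_subtype_compl (fun i : Fin 4 => d i = α)
    rw [Fintype.card_fin] at hc
    omega
  refine ⟨k, hk1, hk3, ?_⟩
  have e : {i : Fin 4 // d i = α} ≃ {i : Fin 4 // pat α β k i = α} :=
    Fintype.equivOfCardEq (by rw [card_pat_eq α β hαβ k (by omega)])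
  set σ := e.extendSubtype with hσ
  have hd : d = pat α β k ∘ σ := by
    funext i
    by_cases h : d i = α
    · have hm := e.extendSubtype_mem i h
      simp only [Function.comp_apply]
      rw [← hσ] at hm
      rw [hm, h]
    · have hni := e.extendSubtype_not_mem i h
      rw [← hσ] at hni
      have hdi : d i = β := by
        have hmem : d i ∈ Set.range d := ⟨i, rfl⟩
        rw [hrange] at hmem
        rcases hmem with h' | h'
        · exact absurd h' h
        · exact h'
      have hp : pat α β k (σ i) = β := by
        unfold pat
        rw [if_neg]
        intro hc
        exact hni (by unfold pat; rw [if_pos hc])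
      simp only [Function.comp_apply]
      rw [hdi, hp]
  rw [mem_Ok]
  refine ⟨P * permUnit σ, ?_⟩
  have hconj := perm_conj σ (pat α β k)
  rw [hd, ← hconj]
  rw [_root_.mul_inv_rev, Units.val_mul, Units.val_mul, permUnit_coe, permUnit_inv_coe]
  simp only [Matrix.mul_assoc]

lemma orb_stab (α β : F) (k : ℕ) :
    Nat.card (Ok α β k) *
      Nat.card (MulAction.stabilizer (ConjAct (Matrix (Fin 4) (Fin 4) F)ˣ)
        (Matrix.diagonal (pat α β k)))
    = Nat.card (Matrix (Fin 4) (Fin 4) F)ˣ := by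
  letI : Fintype (MulAction.orbit (ConjAct (Matrix (Fin 4) (Fin 4) F)ˣ)
      (Matrix.diagonal (pat α β k))) := Fintype.ofFinite _
  letI : Fintype (MulAction.stabilizer (ConjAct (Matrix (Fin 4) (Fin 4) F)ˣ)
      (Matrix.diagonal (pat α β k))) := Fintype.ofFinite _
  have horb := MulAction.card_orbit_mul_card_stabilizer_eq_card_group
    (ConjAct (Matrix (Fin 4) (Fin 4) F)ˣ) (Matrix.diagonal (pat α β k))
  have h1 : Nat.card (Ok α β k) = Fintype.card (MulAction.orbit
      (ConjAct (Matrix (Fin 4) (Fin 4) F)ˣ) (Matrix.diagonal (pat α β k))) := by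
    rw [Ok]
    exact Nat.card_eq_fintype_card
  have h2 : Nat.card (MulAction.stabilizer (ConjAct (Matrix (Fin 4) (Fin 4) F)ˣ)
      (Matrix.diagonal (pat α β k))) = Fintype.card (MulAction.stabilizer
      (ConjAct (Matrix (Fin 4) (Fin 4) F)ˣ) (Matrix.diagonal (pat α β k))) :=
    Nat.card_eq_fintype_card
  have h3 : Nat.card (Matrix (Fin 4) (Fin 4) F)ˣ
      = Fintype.card (ConjAct (Matrix (Fin 4) (Fin 4) F)ˣ) := by
    rw [ConjAct.card]
    exact Nat.card_eq_fintype_card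
  rw [h1, h2, h3, horb]

lemma orbit_count (α β : F) (hαβ : α ≠ β) (k : ℕ) (hk1 : 1 ≤ k) (hk3 : k ≤ 3) :
    Nat.card (Ok α β k) *
      (Nat.card (Matrix (Fin k) (Fin k) F)ˣ *
        Nat.card (Matrix (Fin (4 - k)) (Fin (4 - k)) F)ˣ)
    = Nat.card (Matrix (Fin 4) (Fin 4) F)ˣ := by
  have hst := stab_card k (4 - k) α β hαβ (pat α β k) (ek k (by omega))
    (pat_ek_inl α β k (by omega)) (pat_ek_inr α β k (by omega))
  rw [← hst]
  exact orb_stab α β k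

end Orbits

end Aux

/-- The number of `4 × 4` matrices over a finite field with `q` elements that are
diagonalizable with eigenvalue set exactly `{α, β}` (with `α ≠ β`) equals
`q⁸ + q⁷ + 4q⁶ + 3q⁵ + 3q⁴ + 2q³`. -/
theorem stmt_8 (F : Type) [Field F] [Fintype F] [DecidableEq F]
    (q : ℕ) (hq : Fintype.card F = q) (α β : F) (hαβ : α ≠ β) :
    Nat.card {A : Matrix (Fin 4) (Fin 4) F //
        ∃ (d : Fin 4 → F) (P : (Matrix (Fin 4) (Fin 4) F)ˣ),
          Set.range d = {α, β} ∧
          A = (P : Matrix (Fin 4) (Fin 4) F) * Matrix.diagonal d *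
              ((P⁻¹ : _) : Matrix (Fin 4) (Fin 4) F)} =
      q ^ 8 + q ^ 7 + 4 * q ^ 6 + 3 * q ^ 5 + 3 * q ^ 4 + 2 * q ^ 3 := by
  haveI : Nontrivial F := ⟨⟨α, β, hαβ⟩⟩
  have hq2 : 2 ≤ q := by rw [← hq]; exact Fintype.one_lt_card
  have hSet : {A : Matrix (Fin 4) (Fin 4) F | ∃ (d : Fin 4 → F) (P : (Matrix (Fin 4) (Fin 4) F)ˣ),
      Set.range d = {α, β} ∧
      A = (P : Matrix (Fin 4) (Fin 4) F) * Matrix.diagonal d *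
        ((P⁻¹ : _) : Matrix (Fin 4) (Fin 4) F)}
      = Ok α β 1 ∪ (Ok α β 2 ∪ Ok α β 3) := by
    ext A
    constructor
    · rintro ⟨d, P, hr, rfl⟩
      obtain ⟨k, hk1, hk3, hmem⟩ := S_mem_orbit α β hαβ d P hr
      have hk : k = 1 ∨ k = 2 ∨ k = 3 := by omega
      rcases hk with rfl | rfl | rfl
      · exact Or.inl hmem
      · exact Or.inr (Or.inl hmem)
      · exact Or.inr (Or.inr hmem)
    · rintro (h | h | h)
      · obtain ⟨u, rfl⟩ := mem_Ok.mp h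
        exact ⟨pat α β 1, u, range_pat α β 1 (by omega) (by omega), rfl⟩
      · obtain ⟨u, rfl⟩ := mem_Ok.mp h
        exact ⟨pat α β 2, u, range_pat α β 2 (by omega) (by omega), rfl⟩
      · obtain ⟨u, rfl⟩ := mem_Ok.mp h
        exact ⟨pat α β 3, u, range_pat α β 3 (by omega) (by omega), rfl⟩
  have h0 : Nat.card {A : Matrix (Fin 4) (Fin 4) F //
      ∃ (d : Fin 4 → F) (P : (Matrix (Fin 4) (Fin 4) F)ˣ),
        Set.range d = {α, β} ∧
        A = (P : Matrix (Fin 4) (Fin 4) F) * Matrix.diagonal d *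
          ((P⁻¹ : _) : Matrix (Fin 4) (Fin 4) F)}
      = Set.ncard {A : Matrix (Fin 4) (Fin 4) F |
          ∃ (d : Fin 4 → F) (P : (Matrix (Fin 4) (Fin 4) F)ˣ),
        Set.range d = {α, β} ∧
        A = (P : Matrix (Fin 4) (Fin 4) F) * Matrix.diagonal d *
          ((P⁻¹ : _) : Matrix (Fin 4) (Fin 4) F)} := Nat.card_coe_set_eq _
  rw [h0, hSet]
  have hd12 : Disjoint (Ok α β 1) (Ok α β 2) := Ok_disj α β hαβ (by omega) (by omega) (by omega)
  have hd13 : Disjoint (Ok α β 1) (Ok α β 3) := Ok_disj α β hαβ (by omega) (by omega) (by omega)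
  have hd23 : Disjoint (Ok α β 2) (Ok α β 3) := Ok_disj α β hαβ (by omega) (by omega) (by omega)
  rw [Set.ncard_union_eq (Set.disjoint_union_right.mpr ⟨hd12, hd13⟩),
    Set.ncard_union_eq hd23]
  rw [← Nat.card_coe_set_eq, ← Nat.card_coe_set_eq, ← Nat.card_coe_set_eq]
  -- cardinalities of the general linear groups
  have hGL : ∀ m : ℕ, Nat.card (Matrix (Fin m) (Fin m) F)ˣ
      = ∏ i : Fin m, (q ^ m - q ^ (i : ℕ)) := by
    intro m
    have h := Matrix.card_GL_field (𝔽 := F) m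
    rw [hq] at h
    exact h
  have hg1 : Nat.card (Matrix (Fin 1) (Fin 1) F)ˣ = q - 1 := by
    rw [hGL, Fin.prod_univ_one]
    norm_num
  have hg2 : Nat.card (Matrix (Fin 2) (Fin 2) F)ˣ = (q ^ 2 - 1) * (q ^ 2 - q) := by
    rw [hGL, Fin.prod_univ_two]
    norm_num
  have hg3 : Nat.card (Matrix (Fin 3) (Fin 3) F)ˣ
      = (q ^ 3 - 1) * (q ^ 3 - q) * (q ^ 3 - q ^ 2) := by
    rw [hGL, Fin.prod_univ_three]
    norm_num
  have hg4 : Nat.card (Matrix (Fin 4) (Fin 4) F)ˣ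
      = (q ^ 4 - 1) * (q ^ 4 - q) * (q ^ 4 - q ^ 2) * (q ^ 4 - q ^ 3) := by
    rw [hGL, Fin.prod_univ_four]
    have h3 : ((3 : Fin 4) : ℕ) = 3 := rfl
    rw [h3]
    norm_num
  -- orbit-stabilizer counts
  have hc1 : Nat.card (Ok α β 1) * (Nat.card (Matrix (Fin 1) (Fin 1) F)ˣ *
      Nat.card (Matrix (Fin 3) (Fin 3) F)ˣ) = Nat.card (Matrix (Fin 4) (Fin 4) F)ˣ :=
    orbit_count α β hαβ 1 (by omega) (by omega)
  have hc2 : Nat.card (Ok α β 2) * (Nat.card (Matrix (Fin 2) (Fin 2) F)ˣ *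
      Nat.card (Matrix (Fin 2) (Fin 2) F)ˣ) = Nat.card (Matrix (Fin 4) (Fin 4) F)ˣ :=
    orbit_count α β hαβ 2 (by omega) (by omega)
  have hc3 : Nat.card (Ok α β 3) * (Nat.card (Matrix (Fin 3) (Fin 3) F)ˣ *
      Nat.card (Matrix (Fin 1) (Fin 1) F)ˣ) = Nat.card (Matrix (Fin 4) (Fin 4) F)ˣ :=
    orbit_count α β hαβ 3 (by omega) (by omega)
  rw [hg1, hg3, hg4] at hc1
  rw [hg2, hg4] at hc2
  rw [hg3, hg1, hg4] at hc3
  -- inequalities for subtraction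
  have l1 : 1 ≤ q := by omega
  have hpow : ∀ i j : ℕ, i ≤ j → q ^ i ≤ q ^ j := fun i j h => Nat.pow_le_pow_right l1 h
  have hpow' : ∀ i j : ℕ, i < j → q ^ i < q ^ j :=
    fun i j h => Nat.pow_lt_pow_right (by omega) h
  have l2 : 1 ≤ q ^ 2 := by have := hpow 0 2 (by omega); simpa using this
  have l3 : q ≤ q ^ 2 := by have := hpow 1 2 (by omega); simpa using this
  have l4 : 1 ≤ q ^ 3 := by have := hpow 0 3 (by omega); simpa using this
  have l5 : q ≤ q ^ 3 := by have := hpow 1 3 (by omega); simpa using this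
  have l6 : q ^ 2 ≤ q ^ 3 := hpow 2 3 (by omega)
  have l7 : 1 ≤ q ^ 4 := by have := hpow 0 4 (by omega); simpa using this
  have l8 : q ≤ q ^ 4 := by have := hpow 1 4 (by omega); simpa using this
  have l9 : q ^ 2 ≤ q ^ 4 := hpow 2 4 (by omega)
  have l10 : q ^ 3 ≤ q ^ 4 := hpow 3 4 (by omega)
  -- positivity of the stabilizer cardinalities
  have p1 : 0 < q - 1 := by omega
  have p2 : 0 < (q ^ 2 - 1) * (q ^ 2 - q) := by
    have := hpow' 0 2 (by omega)
    have := hpow' 1 2 (by omega)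
    simp only [pow_zero, pow_one] at *
    exact Nat.mul_pos (by omega) (by omega)
  have p3 : 0 < (q ^ 3 - 1) * (q ^ 3 - q) * (q ^ 3 - q ^ 2) := by
    have := hpow' 0 3 (by omega)
    have := hpow' 1 3 (by omega)
    have := hpow' 2 3 (by omega)
    simp only [pow_zero, pow_one] at *
    exact Nat.mul_pos (Nat.mul_pos (by omega) (by omega)) (by omega)
  -- orbit cardinalities
  have ho1 : Nat.card (Ok α β 1) = q ^ 6 + q ^ 5 + q ^ 4 + q ^ 3 := by
    have harith : (q ^ 6 + q ^ 5 + q ^ 4 + q ^ 3) *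
        ((q - 1) * ((q ^ 3 - 1) * (q ^ 3 - q) * (q ^ 3 - q ^ 2)))
        = (q ^ 4 - 1) * (q ^ 4 - q) * (q ^ 4 - q ^ 2) * (q ^ 4 - q ^ 3) := by
      zify [l1, l2, l3, l4, l5, l6, l7, l8, l9, l10]
      ring
    apply Nat.eq_of_mul_eq_mul_right (Nat.mul_pos p1 p3)
    rw [hc1, harith]
  have ho2 : Nat.card (Ok α β 2) = q ^ 8 + q ^ 7 + 2 * q ^ 6 + q ^ 5 + q ^ 4 := by
    have harith : (q ^ 8 + q ^ 7 + 2 * q ^ 6 + q ^ 5 + q ^ 4) *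
        ((q ^ 2 - 1) * (q ^ 2 - q) * ((q ^ 2 - 1) * (q ^ 2 - q)))
        = (q ^ 4 - 1) * (q ^ 4 - q) * (q ^ 4 - q ^ 2) * (q ^ 4 - q ^ 3) := by
      zify [l1, l2, l3, l4, l5, l6, l7, l8, l9, l10]
      ring
    apply Nat.eq_of_mul_eq_mul_right (Nat.mul_pos p2 p2)
    rw [hc2, harith]
  have ho3 : Nat.card (Ok α β 3) = q ^ 6 + q ^ 5 + q ^ 4 + q ^ 3 := by
    have harith : (q ^ 6 + q ^ 5 + q ^ 4 + q ^ 3) *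
        ((q ^ 3 - 1) * (q ^ 3 - q) * (q ^ 3 - q ^ 2) * (q - 1))
        = (q ^ 4 - 1) * (q ^ 4 - q) * (q ^ 4 - q ^ 2) * (q ^ 4 - q ^ 3) := by
      zify [l1, l2, l3, l4, l5, l6, l7, l8, l9, l10]
      ring
    apply Nat.eq_of_mul_eq_mul_right (Nat.mul_pos p3 p1)
    rw [hc3, harith]
  rw [ho1, ho2, ho3]
  ring
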